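/- arXiv:1803.02867 — 3 statements merged into one kernel-verified Lean document; each statement's English description precedes it below -/
import Mathlib

section
/- For any nonnegative integers n and i, the integral of (u - 1/2)^((i+1)/(2n+1)) over u in [0,1] equals 0 if i is even, and equals (2n+1)/(2n+2+i) * 2^(-(i+1)/(2n+1)) if i is odd, where fractional powers of negative numbers are interpreted via the odd (2n+1)-th real root. -/
/-- integral of the `(i+1)`-th power of the `(2n+1)`-th real root of `u - 1/2`
over `[0,1]` is `0` for even `i` and `(2n+1)/(2n+2+i) * 2^(-(i+1)/(2n+1))` for odd `i`. -/
theorem stmt1 (n i : ℕ) (r : ℝ → ℝ) (hr : ∀ x : ℝ, r x ^ (2 * n + 1) = x) :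
    ∫ u in (0:ℝ)..1, (r (u - 1/2)) ^ (i + 1) =
      if Even i then 0
      else ((2 * n + 1 : ℝ)) / (2 * n + 2 + i) * (2:ℝ) ^ (-((i:ℝ) + 1) / (2 * n + 1)) := by
  have hodd : Odd (2 * n + 1) := ⟨n, by ring⟩
  have hinj : Function.Injective fun a : ℝ => a ^ (2 * n + 1) :=
    (Odd.strictMono_pow hodd).injective
  have hneg : ∀ x : ℝ, r (-x) = - r x := by
    intro x
    apply hinj
    simp only
    rw [hr, Odd.neg_pow hodd, hr]
  have hpos : ∀ x : ℝ, 0 ≤ x → r x = x ^ ((2 * n + 1 : ℝ)⁻¹) := by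
    intro x hx
    have h0 : 0 ≤ r x := by
      by_contra h
      push_neg at h
      have : r x ^ (2 * n + 1) < 0 := Odd.pow_neg hodd h
      rw [hr] at this; linarith
    have h1 := Real.pow_rpow_inv_natCast h0 (n := 2 * n + 1) (by omega)
    rw [hr] at h1
    rw [← h1]
    norm_num
  set f : ℝ → ℝ := fun v => r v ^ (i + 1) with hf
  have hcomp : (∫ u in (0:ℝ)..1, f (u - 1/2)) = ∫ v in (-(1/2) : ℝ)..(1/2), f v := by
    rw [intervalIntegral.integral_comp_sub_right f (1/2)]
    norm_num
  set c : ℝ := (2 * n + 1 : ℝ)⁻¹ with hc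
  have hNpos : (0:ℝ) < 2 * n + 1 := by positivity
  have hcpos : 0 < c := by positivity
  have hcont : Continuous fun v : ℝ => (|v| ^ c) ^ (i + 1) := by
    exact Continuous.pow (continuous_abs.rpow_const fun x => Or.inr hcpos.le) _
  have habs : ∀ v : ℝ, |r v| ^ (i+1) = (|v| ^ c) ^ (i + 1) := by
    intro v
    rcases le_total 0 v with h | h
    · rw [abs_of_nonneg h, hpos v h, abs_of_nonneg (Real.rpow_nonneg h c)]
    · have hv : r v = - r (-v) := by rw [hneg]; ring
      rw [abs_of_nonpos h, hv, abs_neg, hpos (-v) (by linarith),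
        abs_of_nonneg (Real.rpow_nonneg (by linarith) c)]
  have hrsign : ∀ v : ℝ, v ≤ 0 → r v ≤ 0 := by
    intro v hv
    have h1 : r v = - r (-v) := by rw [hneg]; ring
    rw [h1, neg_nonpos, hpos (-v) (by linarith)]
    exact Real.rpow_nonneg (by linarith) c
  have hcontOn1 : ContinuousOn f (Set.Icc (0:ℝ) (1/2)) := by
    apply hcont.continuousOn.congr
    intro v hv
    show r v ^ (i+1) = (|v| ^ c) ^ (i+1)
    rw [← habs, abs_of_nonneg (by rw [hpos v hv.1]; exact Real.rpow_nonneg hv.1 c)]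
  have hcontOn2 : ContinuousOn f (Set.Icc (-(1/2):ℝ) 0) := by
    rcases Nat.even_or_odd i with hi | hi
    · apply (hcont.neg.continuousOn).congr
      intro v hv
      show r v ^ (i+1) = -(|v| ^ c) ^ (i+1)
      rw [← habs v, abs_of_nonpos (hrsign v hv.2), Odd.neg_pow (Even.add_one hi)]
      ring
    · apply hcont.continuousOn.congr
      intro v hv
      show r v ^ (i+1) = (|v| ^ c) ^ (i+1)
      rw [← habs v, ← abs_pow, abs_of_nonneg (Even.pow_nonneg (Odd.add_one hi) _)]
  have hint1 : IntervalIntegrable f MeasureTheory.volume 0 (1/2) := by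
    apply ContinuousOn.intervalIntegrable
    rw [Set.uIcc_of_le (by norm_num : (0:ℝ) ≤ 1/2)]
    exact hcontOn1
  have hint2 : IntervalIntegrable f MeasureTheory.volume (-(1/2)) 0 := by
    apply ContinuousOn.intervalIntegrable
    rw [Set.uIcc_of_le (by norm_num : (-(1/2):ℝ) ≤ 0)]
    exact hcontOn2
  have hsplit : (∫ v in (-(1/2):ℝ)..(1/2), f v) =
      (∫ v in (-(1/2):ℝ)..0, f v) + ∫ v in (0:ℝ)..(1/2), f v :=
    (intervalIntegral.integral_add_adjacent_intervals hint2 hint1).symm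
  have hleft : (∫ v in (-(1/2):ℝ)..0, f v) = (-1:ℝ)^(i+1) * ∫ v in (0:ℝ)..(1/2), f v := by
    have h1 : (∫ v in (0:ℝ)..(1/2), f (-v)) = ∫ v in (-(1/2):ℝ)..(-0:ℝ), f v :=
      intervalIntegral.integral_comp_neg f
    rw [neg_zero] at h1
    rw [← h1]
    have heq : ∀ v : ℝ, f (-v) = (-1:ℝ)^(i+1) * f v := by
      intro v
      show r (-v) ^ (i+1) = (-1:ℝ)^(i+1) * r v ^ (i+1)
      rw [hneg, neg_pow]
    simp_rw [heq]
    exact intervalIntegral.integral_const_mul _ _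
  have hright : (∫ v in (0:ℝ)..(1/2), f v) =
      ((1/2:ℝ) ^ (c * ((i:ℝ)+1) + 1)) / (c * ((i:ℝ)+1) + 1) := by
    have hcongr : (∫ v in (0:ℝ)..(1/2), f v) = ∫ v in (0:ℝ)..(1/2), v ^ (c * ((i:ℝ)+1)) := by
      apply intervalIntegral.integral_congr
      intro v hv
      rw [Set.uIcc_of_le (by norm_num)] at hv
      show r v ^ (i+1) = _
      rw [hpos v hv.1, ← Real.rpow_natCast (v ^ c) (i+1), ← Real.rpow_mul hv.1]
      norm_num
    have hp' : (0:ℝ) < c*((i:ℝ)+1) := by positivity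
    rw [hcongr, integral_rpow (Or.inl (by linarith))]
    rw [Real.zero_rpow (by positivity)]
    ring
  rw [show (∫ u in (0:ℝ)..1, r (u - 1/2) ^ (i+1)) = ∫ v in (-(1/2):ℝ)..(1/2), f v from hcomp,
    hsplit, hleft]
  rcases Nat.even_or_odd i with hi | hi
  · rw [if_pos hi, Odd.neg_pow (Even.add_one hi)]
    ring
  · rw [if_neg (Nat.not_even_iff_odd.mpr hi), Even.neg_pow (Odd.add_one hi), hright]
    have hq : c * ((i:ℝ)+1) + 1 = (2*(n:ℝ)+2+i) / (2*(n:ℝ)+1) := by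
      rw [hc]; field_simp; ring
    have hpow : (1/2:ℝ) ^ (c*((i:ℝ)+1)+1) = 2 ^ (-(c*((i:ℝ)+1)+1)) := by
      rw [Real.rpow_neg (by norm_num), ← Real.inv_rpow (by norm_num)]
      norm_num
    have hexp : (-((i:ℝ) + 1)) / (2 * (n:ℝ) + 1) = -(c*((i:ℝ)+1)) := by
      rw [hc]; field_simp
    have h2 : (2:ℝ) ^ (-(c*((i:ℝ)+1))) = 2 * 2 ^ (-(c*((i:ℝ)+1)+1)) := by
      rw [show -(c*((i:ℝ)+1)) = 1 + -(c*((i:ℝ)+1)+1) by ring,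
        Real.rpow_add (by norm_num), Real.rpow_one]
    rw [hexp, hpow, h2, hq]
    have hden : (2*(n:ℝ)+2+i) ≠ 0 := by positivity
    field_simp
    ring
end

section
/- Let k ≥ 2 be an even integer, n ≥ 0 an integer, and (2n+3)/(k(2n+1)) < θ < 1. Then the polynomial P(z) = ((2n+1)/(2n+k+1)) * 2^(k/(2n+1)) * z^(k+1) + ∑_{i odd, 1 ≤ i ≤ k-1} r_θ(k,i) * z^i, with r_θ(k,i) as defined, has exactly one root z₀ > 0, and -z₀ is also a root. -/
open Finset in
private lemma stmt8_aux (k m : ℕ) (A : ℝ) (hA : 0 < A) (c : ℕ → ℝ) (hk : 2 ≤ k)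
    (hm : m ∈ Finset.filter (fun i => Odd i) (Finset.range k))
    (hneg : ∀ i ∈ Finset.filter (fun i => Odd i) (Finset.range k), i ≤ m → c i < 0)
    (hpos : ∀ i ∈ Finset.filter (fun i => Odd i) (Finset.range k), m < i → 0 ≤ c i) :
    ∃ z₀ : ℝ, 0 < z₀ ∧
      (A * z₀ ^ (k+1) + ∑ i ∈ Finset.filter (fun i => Odd i) (Finset.range k), c i * z₀ ^ i = 0) ∧
      ∀ z : ℝ, 0 < z →
        A * z ^ (k+1) + ∑ i ∈ Finset.filter (fun i => Odd i) (Finset.range k), c i * z ^ i = 0 →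
        z = z₀ := by
  classical
  set F := Finset.filter (fun i => Odd i) (Finset.range k) with hF
  set Q : ℝ → ℝ := fun z => A * z ^ (k+1) + ∑ i ∈ F, c i * z ^ i with hQdef
  have hQz : ∀ z : ℝ, Q z = A * z ^ (k+1) + ∑ i ∈ F, c i * z ^ i := fun z => rfl
  have hmem : ∀ i ∈ F, Odd i ∧ i < k := by
    intro i hi
    simp only [hF, Finset.mem_filter, Finset.mem_range] at hi
    exact ⟨hi.2, hi.1⟩
  obtain ⟨hmo, hmk⟩ := hmem m hm
  have hm1 : 1 ≤ m := hmo.pos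
  have h1F : 1 ∈ F := by
    simp only [hF, Finset.mem_filter, Finset.mem_range]
    exact ⟨by omega, odd_one⟩
  have hc1 : c 1 < 0 := hneg 1 h1F hm1
  set Csum : ℝ := ∑ i ∈ F, |c i| with hCsum
  have hCs : 0 ≤ Csum := Finset.sum_nonneg fun i _ => abs_nonneg _
  -- uniqueness key
  have key : ∀ x y : ℝ, 0 < x → x < y → Q x = 0 → 0 < Q y := by
    intro x y hx hxy hQx
    obtain ⟨t, ht1, rfl⟩ : ∃ t : ℝ, 1 < t ∧ y = x * t :=
      ⟨y / x, (one_lt_div hx).2 hxy, by field_simp⟩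
    have h0 : A * x ^ (k+1) + ∑ i ∈ F, c i * x ^ i = 0 := hQx
    have hsum : ∑ i ∈ F, c i * x ^ i * (t ^ i - t ^ m)
        = (∑ i ∈ F, c i * (x * t) ^ i) - t ^ m * ∑ i ∈ F, c i * x ^ i := by
      rw [Finset.mul_sum, ← Finset.sum_sub_distrib]
      exact Finset.sum_congr rfl fun i _ => by ring
    have hexpand : Q (x * t)
        = (∑ i ∈ F, c i * x ^ i * (t ^ i - t ^ m)) + A * x ^ (k+1) * (t ^ (k+1) - t ^ m) := by
      rw [hQz, hsum]
      linear_combination (t ^ m) * h0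
    have hterm : ∀ i ∈ F, 0 ≤ c i * x ^ i * (t ^ i - t ^ m) := by
      intro i hi
      rcases le_or_gt i m with h | h
      · have hci := hneg i hi h
        have hpow : t ^ i ≤ t ^ m := pow_le_pow_right₀ ht1.le h
        have h1 : c i * x ^ i ≤ 0 := mul_nonpos_of_nonpos_of_nonneg hci.le (pow_pos hx i).le
        nlinarith
      · have hci := hpos i hi h
        exact mul_nonneg (mul_nonneg hci (pow_pos hx i).le)
          (sub_nonneg.2 (pow_le_pow_right₀ ht1.le h.le))
    have hlead : 0 < A * x ^ (k+1) * (t ^ (k+1) - t ^ m) := by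
      have : t ^ m < t ^ (k+1) := pow_lt_pow_right₀ ht1 (by omega)
      exact mul_pos (mul_pos hA (pow_pos hx _)) (sub_pos.2 this)
    rw [hexpand]
    exact add_pos_of_nonneg_of_pos (Finset.sum_nonneg hterm) hlead
  -- existence : big point
  set b : ℝ := max 1 ((Csum + 1) / A) with hb
  have hb1 : (1:ℝ) ≤ b := le_max_left _ _
  have hb0 : (0:ℝ) < b := by linarith
  have hbge : Csum + 1 ≤ A * b := by
    have h := le_max_right 1 ((Csum + 1) / A)
    rw [div_le_iff₀ hA] at h
    linarith [h]
  have hQb : 0 < Q b := by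
    have h1 : ∀ i ∈ F, -(|c i| * b ^ (k-1)) ≤ c i * b ^ i := by
      intro i hi
      have hik : i ≤ k - 1 := by have := (hmem i hi).2; omega
      have hpow : b ^ i ≤ b ^ (k-1) := pow_le_pow_right₀ hb1 hik
      have h2 : |c i| * b ^ i ≤ |c i| * b ^ (k-1) := by
        exact mul_le_mul_of_nonneg_left hpow (abs_nonneg _)
      have h3 : -|c i| * b ^ i ≤ c i * b ^ i :=
        mul_le_mul_of_nonneg_right (neg_abs_le _) (pow_pos hb0 i).le
      nlinarith
    have hsum : -(Csum * b ^ (k-1)) ≤ ∑ i ∈ F, c i * b ^ i := by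
      have h := Finset.sum_le_sum h1
      have h2 : ∑ i ∈ F, -(|c i| * b ^ (k-1)) = -(Csum * b ^ (k-1)) := by
        rw [Finset.sum_neg_distrib, ← Finset.sum_mul]
      linarith [h, h2.ge, h2.le]
    have hb2 : b ^ (k+1) = b ^ (k-1) * b ^ 2 := by
      rw [← pow_add]; congr 1; omega
    have h3 : (1:ℝ) ≤ A * b ^ 2 - Csum := by nlinarith
    have h4 : (0:ℝ) < b ^ (k-1) := pow_pos hb0 _
    rw [hQz]
    nlinarith [hsum, h3, h4, hb2]
  -- existence : small point
  set D : ℝ := Csum + A + 1 with hD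
  have hD0 : 0 < D := by linarith
  set a : ℝ := min 1 (-(c 1) / (2 * D)) with ha
  have ha0 : 0 < a := lt_min one_pos (div_pos (by linarith) (by linarith))
  have ha1 : a ≤ 1 := min_le_left _ _
  have haD : D * a ≤ -(c 1) / 2 := by
    have h := min_le_right 1 (-(c 1) / (2 * D))
    rw [le_div_iff₀ (by linarith)] at h
    linarith [h]
  have hQa : Q a < 0 := by
    have hsplit : ∑ i ∈ F, c i * a ^ i = c 1 * a ^ 1 + ∑ i ∈ F.erase 1, c i * a ^ i :=
      (Finset.add_sum_erase F _ h1F).symm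
    have hbound : ∀ i ∈ F.erase 1, c i * a ^ i ≤ |c i| * a ^ 2 := by
      intro i hi
      have hi1 : i ≠ 1 := Finset.ne_of_mem_erase hi
      have hiF : i ∈ F := Finset.mem_of_mem_erase hi
      obtain ⟨r, hr⟩ := (hmem i hiF).1
      have h2i : 2 ≤ i := by omega
      have hpow : a ^ i ≤ a ^ 2 := pow_le_pow_of_le_one ha0.le ha1 h2i
      calc c i * a ^ i ≤ |c i| * a ^ i :=
            mul_le_mul_of_nonneg_right (le_abs_self _) (pow_pos ha0 i).le
        _ ≤ |c i| * a ^ 2 := mul_le_mul_of_nonneg_left hpow (abs_nonneg _)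
    have hsum2 : ∑ i ∈ F.erase 1, c i * a ^ i ≤ Csum * a ^ 2 := by
      calc ∑ i ∈ F.erase 1, c i * a ^ i ≤ ∑ i ∈ F.erase 1, |c i| * a ^ 2 :=
            Finset.sum_le_sum hbound
        _ = (∑ i ∈ F.erase 1, |c i|) * a ^ 2 := by rw [Finset.sum_mul]
        _ ≤ Csum * a ^ 2 := by
            apply mul_le_mul_of_nonneg_right _ (sq_nonneg a)
            exact Finset.sum_le_sum_of_subset_of_nonneg (Finset.erase_subset _ _)
              (fun i _ _ => abs_nonneg _)
    have hlead : A * a ^ (k+1) ≤ A * a ^ 2 :=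
      mul_le_mul_of_nonneg_left (pow_le_pow_of_le_one ha0.le ha1 (by omega)) hA.le
    rw [hQz, hsplit]
    have hfin : c 1 * a ^ 1 + Csum * a ^ 2 + A * a ^ 2 < 0 := by
      have ha2 : a ^ 2 = a * a := sq a
      have : (Csum + A) * a ≤ D * a := by nlinarith
      nlinarith
    linarith [hsum2, hlead, hfin]
  -- IVT
  have hab : a ≤ b := le_trans ha1 hb1
  have hQcont : Continuous Q := by
    apply Continuous.add
    · fun_prop
    · exact continuous_finset_sum _ (fun i _ => by fun_prop)
  obtain ⟨z₀, hz₀mem, hz₀eq⟩ :=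
    (intermediate_value_Icc hab hQcont.continuousOn) ⟨hQa.le, hQb.le⟩
  have hz₀pos : 0 < z₀ := lt_of_lt_of_le ha0 hz₀mem.1
  refine ⟨z₀, hz₀pos, hz₀eq, ?_⟩
  intro z hz hQzz
  rcases lt_trichotomy z z₀ with h | h | h
  · exact absurd hz₀eq (ne_of_gt (key z z₀ hz h hQzz))
  · exact h
  · exact absurd hQzz (ne_of_gt (key z₀ z hz₀pos h hz₀eq))

private lemma stmt8_smono (a i j K : ℝ) (ha : 0 ≤ a) (hi : 1 ≤ i) (hij : i ≤ j)
    (hj : j ≤ K - 1) :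
    i / (K - i + 1) * ((a + 2 + i) / (a + i)) ≤ j / (K - j + 1) * ((a + 2 + j) / (a + j)) := by
  have hKi : 0 < K - i + 1 := by linarith
  have hKj : 0 < K - j + 1 := by linarith
  have hai : 0 < a + i := by linarith
  have haj : 0 < a + j := by linarith
  rw [div_mul_div_comm, div_mul_div_comm, div_le_div_iff₀ (by positivity) (by positivity)]
  obtain ⟨d, hd, rfl⟩ : ∃ d : ℝ, 0 ≤ d ∧ j = i + d := ⟨j - i, by linarith, by ring⟩
  have hK : 0 ≤ K + 1 := by linarith
  have h0 : (0:ℝ) ≤ i := by linarith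
  nlinarith [mul_nonneg h0 (sq_nonneg d), mul_nonneg (mul_nonneg h0 (sq_nonneg d)) hK,
    mul_nonneg (sq_nonneg i) hd, mul_nonneg (mul_nonneg (sq_nonneg i) hd) hK,
    mul_nonneg (mul_nonneg (mul_nonneg ha hd) hK) h0,
    mul_nonneg (mul_nonneg ha (sq_nonneg d)) hK,
    mul_nonneg (mul_nonneg (mul_nonneg ha h0) hd) hK,
    mul_nonneg (mul_nonneg (sq_nonneg a) hd) hK, mul_nonneg ha hd]

/-- for even `k ≥ 2` and `(2n+3)/(k(2n+1)) < θ < 1`, `P` has exactly one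
positive root `z₀`, and `-z₀` is also a root. -/
theorem stmt8 (k n : ℕ) (hk : 2 ≤ k) (hke : Even k) (θ : ℝ)
    (hθc : (2 * (n:ℝ) + 3) / ((k:ℝ) * (2 * (n:ℝ) + 1)) < θ) (hθ1 : θ < 1)
    (P : ℝ → ℝ)
    (hP : P = fun z : ℝ =>
      ((2 * (n:ℝ) + 1) / (2 * (n:ℝ) + (k:ℝ) + 1)) * (2:ℝ) ^ ((k:ℝ) / (2 * (n:ℝ) + 1))
          * z ^ (k + 1)
        + ∑ i ∈ (Finset.range k).filter (fun i => Odd i),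
            (k.choose i : ℝ) * ((2 * (n:ℝ) + 1) / (2 * (n:ℝ) + 2 + i))
              * (2:ℝ) ^ (((i:ℝ) - 1) / (2 * (n:ℝ) + 1))
              * ((i:ℝ) / ((k:ℝ) - i + 1) * ((2 * (n:ℝ) + 2 + i) / (2 * (n:ℝ) + i)) - θ)
              * z ^ i) :
    ∃ z₀ : ℝ, 0 < z₀ ∧ P z₀ = 0 ∧ P (-z₀) = 0 ∧ ∀ z : ℝ, 0 < z → P z = 0 → z = z₀ := by
  classical
  set F := (Finset.range k).filter (fun i => Odd i) with hF
  set A : ℝ := ((2 * (n:ℝ) + 1) / (2 * (n:ℝ) + (k:ℝ) + 1)) * (2:ℝ) ^ ((k:ℝ) / (2 * (n:ℝ) + 1))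
    with hA
  set c : ℕ → ℝ := fun i =>
    (k.choose i : ℝ) * ((2 * (n:ℝ) + 1) / (2 * (n:ℝ) + 2 + i))
      * (2:ℝ) ^ (((i:ℝ) - 1) / (2 * (n:ℝ) + 1))
      * ((i:ℝ) / ((k:ℝ) - i + 1) * ((2 * (n:ℝ) + 2 + i) / (2 * (n:ℝ) + i)) - θ) with hc
  have hPz : ∀ z : ℝ, P z = A * z ^ (k+1) + ∑ i ∈ F, c i * z ^ i := by
    intro z; rw [hP]
  have hmem : ∀ i ∈ F, Odd i ∧ i < k := by
    intro i hi
    simp only [hF, Finset.mem_filter, Finset.mem_range] at hi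
    exact ⟨hi.2, hi.1⟩
  have hA0 : 0 < A := by
    rw [hA]
    have : (0:ℝ) < 2 * (n:ℝ) + 1 := by positivity
    have : (0:ℝ) < 2 * (n:ℝ) + (k:ℝ) + 1 := by positivity
    positivity
  have hk0 : (0:ℝ) < k := by positivity
  -- prefactor positivity
  have hpref : ∀ i ∈ F, 0 < (k.choose i : ℝ) * ((2 * (n:ℝ) + 1) / (2 * (n:ℝ) + 2 + i))
      * (2:ℝ) ^ (((i:ℝ) - 1) / (2 * (n:ℝ) + 1)) := by
    intro i hi
    have h1 : 0 < (k.choose i : ℝ) := by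
      exact_mod_cast Nat.choose_pos (le_of_lt (hmem i hi).2)
    have h2 : (0:ℝ) < (2 * (n:ℝ) + 1) / (2 * (n:ℝ) + 2 + i) := by positivity
    have h3 : (0:ℝ) < (2:ℝ) ^ (((i:ℝ) - 1) / (2 * (n:ℝ) + 1)) :=
      Real.rpow_pos_of_pos two_pos _
    exact mul_pos (mul_pos h1 h2) h3
  set S : ℕ → ℝ := fun i =>
    (i:ℝ) / ((k:ℝ) - i + 1) * ((2 * (n:ℝ) + 2 + i) / (2 * (n:ℝ) + i)) with hS
  have hsign : ∀ i ∈ F, (c i < 0 ↔ S i < θ) := by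
    intro i hi
    constructor
    · intro h
      by_contra hcon
      push_neg at hcon
      have : 0 ≤ c i := mul_nonneg (hpref i hi).le (by simp only [hS] at hcon ⊢; linarith)
      linarith
    · intro h
      exact mul_neg_of_pos_of_neg (hpref i hi) (by simp only [hS] at h ⊢; linarith)
  -- S monotone on F
  have hSmono : ∀ i ∈ F, ∀ j ∈ F, i ≤ j → S i ≤ S j := by
    intro i hi j hj hij
    have h1 : 1 ≤ (i:ℝ) := by exact_mod_cast (hmem i hi).1.pos
    have h2 : (i:ℝ) ≤ (j:ℝ) := by exact_mod_cast hij
    have h3 : (j:ℝ) ≤ (k:ℝ) - 1 := by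
      have := (hmem j hj).2
      have : (j:ℝ) + 1 ≤ (k:ℝ) := by exact_mod_cast this
      linarith
    have := stmt8_smono (2 * (n:ℝ)) (i:ℝ) (j:ℝ) (k:ℝ) (by positivity) h1 h2 h3
    simp only [hS]
    convert this using 3 <;> ring
  -- c 1 < 0
  have h1F : 1 ∈ F := by
    simp only [hF, Finset.mem_filter, Finset.mem_range]
    exact ⟨by omega, odd_one⟩
  have hc1 : c 1 < 0 := by
    rw [hsign 1 h1F]
    have hS1 : S 1 = (2 * (n:ℝ) + 3) / ((k:ℝ) * (2 * (n:ℝ) + 1)) := by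
      simp only [hS]
      push_cast
      rw [div_mul_div_comm]
      congr 1 <;> ring
    rw [hS1]; exact hθc
  -- threshold m
  set T := F.filter (fun i => c i < 0) with hT
  have hT1 : 1 ∈ T := by
    simp only [hT, Finset.mem_filter]
    exact ⟨h1F, hc1⟩
  set m := T.max' ⟨1, hT1⟩ with hm
  have hmT : m ∈ T := T.max'_mem _
  have hmF : m ∈ F := (Finset.mem_filter.1 hmT).1
  have hcm : c m < 0 := (Finset.mem_filter.1 hmT).2
  have hneg : ∀ i ∈ F, i ≤ m → c i < 0 := by
    intro i hi him
    rw [hsign i hi]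
    have := hSmono i hi m hmF him
    have := (hsign m hmF).1 hcm
    linarith
  have hpos : ∀ i ∈ F, m < i → 0 ≤ c i := by
    intro i hi him
    by_contra hcon
    push_neg at hcon
    have : i ∈ T := by simp only [hT, Finset.mem_filter]; exact ⟨hi, hcon⟩
    have := T.le_max' i this
    omega
  obtain ⟨z₀, hz₀pos, hz₀eq, hz₀uniq⟩ := stmt8_aux k m A hA0 c hk hmF hneg hpos
  have hodd : ∀ z : ℝ, P (-z) = - P z := by
    intro z
    rw [hPz, hPz]
    have hk1 : Odd (k + 1) := hke.add_one
    rw [hk1.neg_pow]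
    have hterms : ∀ i ∈ F, c i * (-z) ^ i = -(c i * z ^ i) := by
      intro i hi
      rw [(hmem i hi).1.neg_pow]; ring
    rw [Finset.sum_congr rfl hterms, Finset.sum_neg_distrib]
    ring
  refine ⟨z₀, hz₀pos, ?_, ?_, ?_⟩
  · rw [hPz]; exact hz₀eq
  · rw [hodd, hPz, hz₀eq, neg_zero]
  · intro z hz hzero
    exact hz₀uniq z hz (by rw [← hPz]; exact hzero)
end

section
/- Let n ≥ 0, k ≥ 2 be integers, 0 ≤ θ < 1, and K(t,u) = 1 + θ r(4(t-1/2)(u-1/2)) with r the (2n+1)-th real root. If a continuous function φ on [0,1] satisfies φ(t) = ∫₀¹ K(t,u) φ(u)^k du for all t, then φ has the form φ(t) = C₁ + C₂ θ r(4(t-1/2)), where C₁ = ∫₀¹ φ(u)^k du and C₂ = ∫₀¹ r(u-1/2) φ(u)^k du, and (C₁, C₂) is a fixed point of V_{k,n}. -/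
/-- The 2-dimensional operator `V_{k,n}` associated with the Hammerstein operator. -/
noncomputable def Vkn (k n : ℕ) (θ : ℝ) (p : ℝ × ℝ) : ℝ × ℝ :=
  (∑ j ∈ Finset.range (k / 2 + 1),
      (k.choose (2 * j) : ℝ) * ((2 * (n:ℝ) + 1) / (2 * (n:ℝ) + 1 + 2 * (j:ℝ)))
        * (2:ℝ) ^ ((2 * (j:ℝ)) / (2 * (n:ℝ) + 1)) * p.1 ^ (k - 2 * j) * (θ * p.2) ^ (2 * j),
   ∑ j ∈ Finset.range ((k + 1) / 2),
      (k.choose (2 * j + 1) : ℝ) * ((2 * (n:ℝ) + 1) / (2 * (n:ℝ) + 2 + (2 * (j:ℝ) + 1)))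
        * (2:ℝ) ^ ((2 * (j:ℝ)) / (2 * (n:ℝ) + 1)) * p.1 ^ (k - (2 * j + 1))
        * (θ * p.2) ^ (2 * j + 1))

section Aux
variable {n : ℕ} {r : ℝ → ℝ}

lemma pow_odd_inj (n : ℕ) {a b : ℝ} (h : a ^ (2*n+1) = b ^ (2*n+1)) : a = b := by
  have : StrictMono (fun x : ℝ => x ^ (2*n+1)) := Odd.strictMono_pow ⟨n, by ring⟩
  exact this.injective h

lemma r_mul (hr : ∀ x : ℝ, r x ^ (2*n+1) = x) (a b : ℝ) : r (a*b) = r a * r b :=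
  pow_odd_inj n (by rw [hr, mul_pow, hr, hr])

lemma r_neg (hr : ∀ x : ℝ, r x ^ (2*n+1) = x) (a : ℝ) : r (-a) = - r a :=
  pow_odd_inj n (by rw [hr, Odd.neg_pow ⟨n, by ring⟩, hr])

lemma r_cont (hr : ∀ x : ℝ, r x ^ (2*n+1) = x) : Continuous r := by
  have hmono : StrictMono (fun x : ℝ => x ^ (2*n+1)) := Odd.strictMono_pow ⟨n, by ring⟩
  have hsurj : Function.Surjective (fun x : ℝ => x ^ (2*n+1)) := fun x => ⟨r x, hr x⟩
  set iso := StrictMono.orderIsoOfSurjective _ hmono hsurj with hiso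
  have : r = ⇑iso.symm := by
    funext x
    apply iso.injective
    rw [OrderIso.apply_symm_apply]
    show (r x) ^ (2*n+1) = x
    exact hr x
  rw [this]
  exact (iso.toHomeomorph.symm).continuous

lemma r_rpow (hr : ∀ x : ℝ, r x ^ (2*n+1) = x) {x : ℝ} (hx : 0 ≤ x) :
    r x = x ^ ((2*(n:ℝ)+1)⁻¹) := by
  apply pow_odd_inj n
  rw [hr, ← Real.rpow_natCast (x ^ _) (2*n+1), ← Real.rpow_mul hx]
  rw [show ((2*(n:ℝ)+1)⁻¹ * ((2*n+1 : ℕ) : ℝ)) = 1 by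
    push_cast; field_simp]
  exact (Real.rpow_one x).symm

lemma r_four (hr : ∀ x : ℝ, r x ^ (2*n+1) = x) :
    r 4 = (2:ℝ) ^ ((2:ℝ)/(2*(n:ℝ)+1)) := by
  apply pow_odd_inj n
  rw [hr, ← Real.rpow_natCast ((2:ℝ) ^ _) (2*n+1), ← Real.rpow_mul (by norm_num)]
  rw [show ((2:ℝ)/(2*(n:ℝ)+1) * ((2*n+1 : ℕ) : ℝ)) = 2 by
    push_cast; field_simp]
  norm_num

lemma integral_r_pow (hr : ∀ x : ℝ, r x ^ (2*n+1) = x) (j : ℕ) :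
    ∫ s in (-(1/2):ℝ)..(1/2), r s ^ j
      = if Even j then
          (2:ℝ) ^ (-(j:ℝ)/(2*(n:ℝ)+1)) * ((2*(n:ℝ)+1)/(2*(n:ℝ)+1+(j:ℝ)))
        else 0 := by
  have hc : Continuous r := r_cont hr
  set m : ℝ := 2*(n:ℝ)+1 with hm
  have hm0 : (0:ℝ) < m := by positivity
  have hmj : (0:ℝ) < m + j := by positivity
  -- the half integral
  have half : ∫ s in (0:ℝ)..(1/2), r s ^ j
      = ((2:ℝ) ^ (-(j:ℝ)/m) * (m/(m+(j:ℝ)))) / 2 := by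
    rw [intervalIntegral.integral_congr (g := fun s => s ^ ((j:ℝ)/m))
      (fun s hs => by
        have hs0 : 0 ≤ s := by
          rw [Set.uIcc_of_le (by norm_num : (0:ℝ) ≤ 1/2)] at hs
          exact hs.1
        rw [r_rpow hr hs0, ← Real.rpow_natCast (s ^ _) j, ← Real.rpow_mul hs0]
        congr 1
        field_simp
        rw [hm]; ring)]
    rw [integral_rpow (Or.inl (by
      have : (0:ℝ) ≤ (j:ℝ)/m := by positivity
      linarith))]
    rw [Real.zero_rpow (by positivity), sub_zero]
    rw [Real.rpow_add (by norm_num : (0:ℝ) < 1/2), Real.rpow_one]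
    rw [show ((1:ℝ)/2) ^ ((j:ℝ)/m) = (2:ℝ) ^ (-(j:ℝ)/m) by
      rw [neg_div, Real.rpow_neg (by norm_num), ← Real.inv_rpow (by norm_num), one_div]]
    have h1 : (j:ℝ)/m + 1 ≠ 0 := by positivity
    field_simp
    ring
  -- the negative half
  have neg : ∫ s in (-(1/2):ℝ)..(0:ℝ), r s ^ j
      = (-1:ℝ)^j * ∫ s in (0:ℝ)..(1/2), r s ^ j := by
    have h0 := intervalIntegral.integral_comp_neg (fun x => r x ^ j) (a := 0) (b := 1/2)
    simp only [neg_zero] at h0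
    rw [← h0]
    have hpt : ∀ x : ℝ, r (-x) ^ j = (-1:ℝ)^j * r x ^ j := fun x => by
      rw [r_neg hr, neg_pow]
    simp only [hpt]
    rw [intervalIntegral.integral_const_mul]
  have hInt : ∀ a b : ℝ, IntervalIntegrable (fun s => r s ^ j) MeasureTheory.volume a b :=
    fun a b => (hc.pow j).intervalIntegrable a b
  rw [← intervalIntegral.integral_add_adjacent_intervals (b := 0) (hInt _ _) (hInt _ _),
    neg, half]
  rcases Nat.even_or_odd j with he | ho
  · rw [if_pos he, he.neg_one_pow]; ring
  · rw [if_neg (Nat.not_even_iff_odd.mpr ho), ho.neg_one_pow]; ring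


lemma expand_integral (hr : ∀ x : ℝ, r x ^ (2*n+1) = x) (C E : ℝ) (k : ℕ)
    (w : ℝ → ℝ) (hw : Continuous w) :
    ∫ s in (-(1/2):ℝ)..(1/2), w s * (C + E * r s)^k
      = ∑ l ∈ Finset.range (k+1), (k.choose l : ℝ) * C^(k-l) * E^l
          * ∫ s in (-(1/2):ℝ)..(1/2), w s * r s ^ l := by
  have hc := r_cont hr
  have h1 : ∀ s : ℝ, w s * (C + E * r s)^k
      = ∑ l ∈ Finset.range (k+1), (k.choose l : ℝ) * C^(k-l) * E^l * (w s * r s ^ l) := by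
    intro s
    rw [add_comm, add_pow, Finset.mul_sum]
    refine Finset.sum_congr rfl fun l hl => ?_
    rw [mul_pow]
    ring
  simp_rw [h1]
  rw [intervalIntegral.integral_finset_sum (f := fun l s => (k.choose l : ℝ) * C^(k-l) * E^l * (w s * r s ^ l)) (fun l _ =>
    (Continuous.intervalIntegrable
      (continuous_const.mul (hw.mul (hc.pow l))) _ _))]
  exact Finset.sum_congr rfl fun l hl => intervalIntegral.integral_const_mul _ _


end Aux



lemma sum_range_even_part (M : ℕ) (G : ℕ → ℝ) (h : ∀ l, ¬ Even l → G l = 0) :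
    ∑ l ∈ Finset.range M, G l = ∑ j ∈ Finset.range ((M+1)/2), G (2*j) := by
  classical
  rw [← Finset.sum_filter_of_ne (p := fun l => Even l)
      (fun x _ hx => by by_contra hc; exact hx (h x hc))]
  refine Finset.sum_nbij' (fun l => l/2) (fun j => 2*j) ?_ ?_ ?_ ?_ ?_
  · intro a ha
    simp only [Finset.mem_filter, Finset.mem_range, Nat.even_iff] at ha ⊢
    omega
  · intro a ha
    simp only [Finset.mem_filter, Finset.mem_range, Nat.even_iff] at ha ⊢
    omega
  · intro a ha
    simp only [Finset.mem_filter, Finset.mem_range, Nat.even_iff] at ha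
    omega
  · intro a ha
    omega
  · intro a ha
    simp only [Finset.mem_filter, Finset.mem_range, Nat.even_iff] at ha
    congr 1
    omega

lemma sum_range_odd_part (M : ℕ) (G : ℕ → ℝ) (h : ∀ l, Even l → G l = 0) :
    ∑ l ∈ Finset.range M, G l = ∑ j ∈ Finset.range (M/2), G (2*j+1) := by
  classical
  rw [← Finset.sum_filter_of_ne (p := fun l => ¬ Even l)
      (fun x _ hx => by by_contra hc; exact hx (h x (hc)))]
  refine Finset.sum_nbij' (fun l => l/2) (fun j => 2*j+1) ?_ ?_ ?_ ?_ ?_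
  · intro a ha
    simp only [Finset.mem_filter, Finset.mem_range, Nat.even_iff] at ha ⊢
    omega
  · intro a ha
    simp only [Finset.mem_filter, Finset.mem_range, Nat.even_iff] at ha ⊢
    omega
  · intro a ha
    simp only [Finset.mem_filter, Finset.mem_range, Nat.even_iff] at ha
    omega
  · intro a ha
    omega
  · intro a ha
    simp only [Finset.mem_filter, Finset.mem_range, Nat.even_iff] at ha
    congr 1
    omega


/-- any continuous solution of the Hammerstein equation has the form
`φ(t) = C₁ + C₂ θ r(4(t-1/2))` with `(C₁, C₂)` a fixed point of `V_{k,n}`. -/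
theorem stmt16 (k n : ℕ) (hk : 2 ≤ k) (θ : ℝ) (hθ0 : 0 ≤ θ) (hθ1 : θ < 1)
    (r : ℝ → ℝ) (hr : ∀ x : ℝ, r x ^ (2 * n + 1) = x)
    (φ : ℝ → ℝ) (hφc : ContinuousOn φ (Set.Icc (0:ℝ) 1))
    (heq : ∀ t ∈ Set.Icc (0:ℝ) 1,
      φ t = ∫ u in (0:ℝ)..1, (1 + θ * r (4 * (t - 1/2) * (u - 1/2))) * (φ u) ^ k)
    (C₁ C₂ : ℝ)
    (hC₁ : C₁ = ∫ u in (0:ℝ)..1, (φ u) ^ k)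
    (hC₂ : C₂ = ∫ u in (0:ℝ)..1, r (u - 1/2) * (φ u) ^ k) :
    (∀ t ∈ Set.Icc (0:ℝ) 1, φ t = C₁ + C₂ * θ * r (4 * (t - 1/2))) ∧
      Vkn k n θ (C₁, C₂) = (C₁, C₂) := by
  have hc : Continuous r := r_cont hr
  have hu01 : Set.uIcc (0:ℝ) 1 = Set.Icc (0:ℝ) 1 := Set.uIcc_of_le (by norm_num)
  have hint1 : IntervalIntegrable (fun u => φ u ^ k) MeasureTheory.volume 0 1 := by
    apply ContinuousOn.intervalIntegrable
    rw [hu01]; exact hφc.pow k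
  have hint2 : IntervalIntegrable (fun u => r (u - 1/2) * φ u ^ k) MeasureTheory.volume 0 1 := by
    apply ContinuousOn.intervalIntegrable
    rw [hu01]
    exact ((hc.comp (continuous_id.sub continuous_const)).continuousOn).mul (hφc.pow k)
  have hpart1 : ∀ t ∈ Set.Icc (0:ℝ) 1, φ t = C₁ + C₂ * θ * r (4 * (t - 1/2)) := by
    intro t ht
    rw [heq t ht]
    have hpt : ∀ u : ℝ, (1 + θ * r (4 * (t - 1/2) * (u - 1/2))) * φ u ^ k
        = φ u ^ k + (θ * r (4 * (t - 1/2))) * (r (u - 1/2) * φ u ^ k) := by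
      intro u
      rw [r_mul hr]
      ring
    simp only [hpt]
    rw [intervalIntegral.integral_add hint1 (hint2.const_mul _),
      intervalIntegral.integral_const_mul, ← hC₁, ← hC₂]
    ring
  refine ⟨hpart1, ?_⟩

  -- Part 2 : fixed point of Vkn
  set E : ℝ := C₂ * θ * r 4 with hE
  have hm0 : (0:ℝ) < 2*(n:ℝ)+1 := by positivity
  have key1 : ∀ (w : ℝ → ℝ), Continuous w →
      (∫ u in (0:ℝ)..1, w (u-1/2) * (φ u)^k)
        = ∑ l ∈ Finset.range (k+1), (k.choose l:ℝ) * C₁^(k-l) * E^l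
            * ∫ s in (-(1/2):ℝ)..(1/2), w s * r s ^ l := by
    intro w hw
    have h1 : ∫ u in (0:ℝ)..1, w (u-1/2) * φ u^k
        = ∫ u in (0:ℝ)..1, (fun s => w s * (C₁ + E*r s)^k) (u - 1/2) := by
      apply intervalIntegral.integral_congr
      intro u hu
      rw [hu01] at hu
      dsimp only
      rw [hpart1 u hu, r_mul hr,
        show C₂*θ*(r 4 * r (u-1/2)) = E * r (u-1/2) by rw [hE]; ring]
    rw [h1, intervalIntegral.integral_comp_sub_right (fun s => w s * (C₁+E*r s)^k) (1/2),
      show (0:ℝ)-1/2 = -(1/2) by norm_num, show (1:ℝ)-1/2 = 1/2 by norm_num]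
    exact expand_integral hr C₁ E k w hw
  have hA : C₁ = ∑ l ∈ Finset.range (k+1), (k.choose l:ℝ) * C₁^(k-l) * E^l
      * ∫ s in (-(1/2):ℝ)..(1/2), r s ^ l := by
    have h0 : C₁ = ∫ u in (0:ℝ)..1, (fun x : ℝ => (1:ℝ)) (u-1/2) * φ u ^ k := by
      rw [hC₁]
      exact intervalIntegral.integral_congr fun u _ => (one_mul _).symm
    conv_lhs => rw [h0]
    rw [key1 _ continuous_const]
    simp only [one_mul]
  have hB : C₂ = ∑ l ∈ Finset.range (k+1), (k.choose l:ℝ) * C₁^(k-l) * E^l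
      * ∫ s in (-(1/2):ℝ)..(1/2), r s ^ (l+1) := by
    have h0 : C₂ = ∫ u in (0:ℝ)..1, (fun s : ℝ => r s) (u-1/2) * φ u ^ k := hC₂
    conv_lhs => rw [h0]
    rw [key1 r hc]
    refine Finset.sum_congr rfl fun l _ => ?_
    congr 1
    refine intervalIntegral.integral_congr fun s _ => ?_
    rw [← pow_succ']
  rw [Prod.ext_iff]
  constructor
  · -- first component
    show (∑ j ∈ Finset.range (k / 2 + 1),
      (k.choose (2 * j) : ℝ) * ((2 * (n:ℝ) + 1) / (2 * (n:ℝ) + 1 + 2 * (j:ℝ)))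
        * (2:ℝ) ^ ((2 * (j:ℝ)) / (2 * (n:ℝ) + 1)) * C₁ ^ (k - 2 * j) * (θ * C₂) ^ (2 * j)) = C₁
    conv_rhs => rw [hA]
    rw [sum_range_even_part (k+1) _ (fun l hl => by
      rw [integral_r_pow hr l, if_neg hl, mul_zero])]
    rw [show (k+1+1)/2 = k/2+1 from by omega]
    refine Finset.sum_congr rfl fun j hj => ?_
    rw [integral_r_pow hr (2*j), if_pos ⟨j, by ring⟩]
    have h2 : (r 4)^(2*j) * (2:ℝ)^(-((2*j:ℕ):ℝ)/(2*(n:ℝ)+1)) = 2^(2*(j:ℝ)/(2*(n:ℝ)+1)) := by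
      rw [r_four hr, ← Real.rpow_natCast ((2:ℝ)^((2:ℝ)/(2*(n:ℝ)+1))) (2*j),
        ← Real.rpow_mul (by norm_num : (0:ℝ) ≤ 2),
        ← Real.rpow_add (by norm_num : (0:ℝ) < 2)]
      congr 1
      push_cast
      field_simp
      ring
    push_cast at h2 ⊢
    rw [hE]
    linear_combination (-((k.choose (2*j):ℝ) * C₁^(k-2*j) * (θ*C₂)^(2*j)
      * ((2*(n:ℝ)+1)/(2*(n:ℝ)+1+2*(j:ℝ))))) * h2
  · -- second component
    show (∑ j ∈ Finset.range ((k + 1) / 2),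
      (k.choose (2 * j + 1) : ℝ) * ((2 * (n:ℝ) + 1) / (2 * (n:ℝ) + 2 + (2 * (j:ℝ) + 1)))
        * (2:ℝ) ^ ((2 * (j:ℝ)) / (2 * (n:ℝ) + 1)) * C₁ ^ (k - (2 * j + 1))
        * (θ * C₂) ^ (2 * j + 1)) = C₂
    conv_rhs => rw [hB]
    rw [sum_range_odd_part (k+1) _ (fun l hl => by
      rw [integral_r_pow hr (l+1), if_neg (Nat.not_even_iff_odd.mpr (Even.add_one hl)), mul_zero])]
    rw [show (k+1)/2 = (k+1)/2 from rfl]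
    refine Finset.sum_congr rfl fun j hj => ?_
    rw [show 2*j+1+1 = 2*(j+1) from by ring, integral_r_pow hr (2*(j+1)), if_pos ⟨j+1, by ring⟩]
    have h2 : (r 4)^(2*j+1) * (2:ℝ)^(-((2*(j+1):ℕ):ℝ)/(2*(n:ℝ)+1)) = 2^(2*(j:ℝ)/(2*(n:ℝ)+1)) := by
      rw [r_four hr, ← Real.rpow_natCast ((2:ℝ)^((2:ℝ)/(2*(n:ℝ)+1))) (2*j+1),
        ← Real.rpow_mul (by norm_num : (0:ℝ) ≤ 2),
        ← Real.rpow_add (by norm_num : (0:ℝ) < 2)]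
      congr 1
      push_cast
      field_simp
      ring
    push_cast at h2 ⊢
    rw [hE]
    linear_combination (-((k.choose (2*j+1):ℝ) * C₁^(k-(2*j+1)) * (θ*C₂)^(2*j+1)
      * ((2*(n:ℝ)+1)/(2*(n:ℝ)+2+(2*(j:ℝ)+1))))) * h2
end
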